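/- Azuma–Hoeffding drift bound for the margin walk: fix ε ∈ (0,1) and let W_1, W_2, ... be {±1}-valued random variables with E[W_{t+1} | W_1,...,W_t] ≤ −ε. Define α = (1+ε)/(2ε) and the coupled process (ρ_t, μ̄_t) by ρ_0 = μ̄_0 = 0 and: if ρ_t > 0 and μ̄_t < 0, both coordinates step by W_{t+1} (with μ̄ clipped above at 0); if ρ_t > 0 and μ̄_t = 0, only ρ steps by W_{t+1}; if ρ_t = 0 and μ̄_t < 0, μ̄ steps by W_{t+1} (clipped at 0) and ρ steps by max(0, W_{t+1}); if ρ_t = μ̄_t = 0, then (ρ_{t+1}, μ̄_{t+1}) = (1,0) if W_{t+1} = 1 and (0,−1) if W_{t+1} = −1. Then the potential Φ_t = ρ_t + α·μ̄_t satisfies E[Φ_{t+1} − Φ_t | W_1,...,W_t] ≤ −ε in each of the four cases. -/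

import Mathlib

open MeasureTheory

/-- Per-step drift bound for the potential `Φ_t = ρ_t + α·μ̄_t` of the coupled
reach/margin walk driven by `±1`-valued variables with conditional drift `≤ −ε`:
conditioned on any history, `E[Φ_{t+1} − Φ_t] ≤ −ε`. -/
theorem potential_drift_bound
    {Ω : Type*} [MeasurableSpace Ω] (μ : Measure Ω) [IsProbabilityMeasure μ]
    (ε : ℝ) (hε0 : 0 < ε) (hε1 : ε < 1)
    (α : ℝ) (hα : α = (1 + ε) / (2 * ε))
    (W : ℕ → Ω → ℝ)
    (hWmeas : ∀ t, Measurable (W t))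
    (hWpm : ∀ t ω, W t ω = 1 ∨ W t ω = -1)
    (hdrift : ∀ (t : ℕ) (w : ℕ → ℝ),
      (∫ ω in {ω | ∀ s < t, W s ω = w s}, W t ω ∂μ)
        ≤ -ε * (μ {ω | ∀ s < t, W s ω = w s}).toReal)
    (ρ μb : ℕ → Ω → ℝ)
    (hinit : ∀ ω, ρ 0 ω = 0 ∧ μb 0 ω = 0)
    (hcase1 : ∀ t ω, 0 < ρ t ω → μb t ω < 0 →
      ρ (t + 1) ω = ρ t ω + W t ω ∧ μb (t + 1) ω = min 0 (μb t ω + W t ω))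
    (hcase2 : ∀ t ω, 0 < ρ t ω → μb t ω = 0 →
      ρ (t + 1) ω = ρ t ω + W t ω ∧ μb (t + 1) ω = μb t ω)
    (hcase3 : ∀ t ω, ρ t ω = 0 → μb t ω < 0 →
      ρ (t + 1) ω = max 0 (W t ω) ∧ μb (t + 1) ω = min 0 (μb t ω + W t ω))
    (hcase4 : ∀ t ω, ρ t ω = 0 → μb t ω = 0 →
      (W t ω = 1 → ρ (t + 1) ω = 1 ∧ μb (t + 1) ω = 0) ∧
      (W t ω = -1 → ρ (t + 1) ω = 0 ∧ μb (t + 1) ω = -1)) :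
    ∀ (t : ℕ) (w : ℕ → ℝ),
      (∫ ω in {ω | ∀ s < t, W s ω = w s},
          ((ρ (t + 1) ω + α * μb (t + 1) ω) - (ρ t ω + α * μb t ω)) ∂μ)
        ≤ -ε * (μ {ω | ∀ s < t, W s ω = w s}).toReal := by
  -- basic facts about `α`
  have hαε : α * ε = (1 + ε) / 2 := by rw [hα]; field_simp
  have hα1 : 1 ≤ α := by
    rw [hα, le_div_iff₀ (by linarith : (0:ℝ) < 2 * ε)]; linarith
  have hαpos : 0 < α := by linarith
  -- the walks take values in ℕ and -ℕ respectively
  have lemA : ∀ t ω, (∃ n : ℕ, ρ t ω = (n : ℝ)) ∧ (∃ m : ℕ, μb t ω = -(m : ℝ)) := by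
    intro t
    induction t with
    | zero =>
      intro ω
      exact ⟨⟨0, by simpa using (hinit ω).1⟩, ⟨0, by simpa using (hinit ω).2⟩⟩
    | succ t ih =>
      intro ω
      obtain ⟨⟨n, hn⟩, ⟨m, hm⟩⟩ := ih ω
      rcases Nat.eq_zero_or_pos n with hn0 | hn1 <;>
        rcases Nat.eq_zero_or_pos m with hm0 | hm1
      · -- case 4
        have hρ : ρ t ω = 0 := by rw [hn, hn0]; simp
        have hμ : μb t ω = 0 := by rw [hm, hm0]; simp
        obtain ⟨h1, h2⟩ := hcase4 t ω hρ hμ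
        rcases hWpm t ω with hw | hw
        · exact ⟨⟨1, by rw [(h1 hw).1]; simp⟩, ⟨0, by rw [(h1 hw).2]; simp⟩⟩
        · exact ⟨⟨0, by rw [(h2 hw).1]; simp⟩, ⟨1, by rw [(h2 hw).2]; simp⟩⟩
      · -- case 3
        have hρ : ρ t ω = 0 := by rw [hn, hn0]; simp
        have hm1' : (1:ℝ) ≤ m := by exact_mod_cast hm1
        have hμ : μb t ω < 0 := by rw [hm]; linarith
        obtain ⟨h1, h2⟩ := hcase3 t ω hρ hμ
        rcases hWpm t ω with hw | hw
        · refine ⟨⟨1, by rw [h1, hw]; norm_num⟩, ⟨m - 1, ?_⟩⟩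
          rw [h2, hm, hw, min_eq_right (by linarith : -(m:ℝ) + 1 ≤ 0), Nat.cast_sub hm1]
          ring
        · refine ⟨⟨0, by rw [h1, hw]; norm_num⟩, ⟨m + 1, ?_⟩⟩
          rw [h2, hm, hw, min_eq_right (by linarith : -(m:ℝ) + -1 ≤ 0)]
          push_cast; ring
      · -- case 2
        have hρ : 0 < ρ t ω := by rw [hn]; exact_mod_cast hn1
        have hμ : μb t ω = 0 := by rw [hm, hm0]; simp
        obtain ⟨h1, h2⟩ := hcase2 t ω hρ hμ
        rcases hWpm t ω with hw | hw
        · exact ⟨⟨n + 1, by rw [h1, hn, hw]; push_cast; ring⟩, ⟨0, by rw [h2, hμ]; simp⟩⟩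
        · exact ⟨⟨n - 1, by rw [h1, hn, hw, Nat.cast_sub hn1]; ring⟩, ⟨0, by rw [h2, hμ]; simp⟩⟩
      · -- case 1
        have hρ : 0 < ρ t ω := by rw [hn]; exact_mod_cast hn1
        have hm1' : (1:ℝ) ≤ m := by exact_mod_cast hm1
        have hμ : μb t ω < 0 := by rw [hm]; linarith
        obtain ⟨h1, h2⟩ := hcase1 t ω hρ hμ
        rcases hWpm t ω with hw | hw
        · refine ⟨⟨n + 1, by rw [h1, hn, hw]; push_cast; ring⟩, ⟨m - 1, ?_⟩⟩
          rw [h2, hm, hw, min_eq_right (by linarith : -(m:ℝ) + 1 ≤ 0), Nat.cast_sub hm1]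
          ring
        · refine ⟨⟨n - 1, by rw [h1, hn, hw, Nat.cast_sub hn1]; ring⟩, ⟨m + 1, ?_⟩⟩
          rw [h2, hm, hw, min_eq_right (by linarith : -(m:ℝ) + -1 ≤ 0)]
          push_cast; ring
  -- the walks are determined by the history of `W`
  have lemB : ∀ t ω ω', (∀ s < t, W s ω = W s ω') →
      ρ t ω = ρ t ω' ∧ μb t ω = μb t ω' := by
    intro t
    induction t with
    | zero =>
      intro ω ω' _
      exact ⟨by rw [(hinit ω).1, (hinit ω').1], by rw [(hinit ω).2, (hinit ω').2]⟩
    | succ t ih =>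
      intro ω ω' hw
      have hwt : W t ω = W t ω' := hw t (Nat.lt_succ_self t)
      obtain ⟨hρe, hμe⟩ := ih ω ω' (fun s hs => hw s (hs.trans (Nat.lt_succ_self t)))
      obtain ⟨⟨n, hn⟩, ⟨m, hm⟩⟩ := lemA t ω
      rcases Nat.eq_zero_or_pos n with hn0 | hn1 <;>
        rcases Nat.eq_zero_or_pos m with hm0 | hm1
      · -- case 4
        have hρ : ρ t ω = 0 := by rw [hn, hn0]; simp
        have hμ : μb t ω = 0 := by rw [hm, hm0]; simp
        obtain ⟨h1, h2⟩ := hcase4 t ω hρ hμ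
        obtain ⟨h1', h2'⟩ := hcase4 t ω' (hρe.symm.trans hρ) (hμe.symm.trans hμ)
        rcases hWpm t ω with hv | hv
        · have hv' : W t ω' = 1 := hwt.symm.trans hv
          exact ⟨by rw [(h1 hv).1, (h1' hv').1], by rw [(h1 hv).2, (h1' hv').2]⟩
        · have hv' : W t ω' = -1 := hwt.symm.trans hv
          exact ⟨by rw [(h2 hv).1, (h2' hv').1], by rw [(h2 hv).2, (h2' hv').2]⟩
      · -- case 3
        have hρ : ρ t ω = 0 := by rw [hn, hn0]; simp
        have hm1' : (1:ℝ) ≤ m := by exact_mod_cast hm1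
        have hμ : μb t ω < 0 := by rw [hm]; linarith
        obtain ⟨h1, h2⟩ := hcase3 t ω hρ hμ
        obtain ⟨h1', h2'⟩ := hcase3 t ω' (hρe.symm.trans hρ) (hμe ▸ hμ)
        exact ⟨by rw [h1, h1', hwt], by rw [h2, h2', hμe, hwt]⟩
      · -- case 2
        have hρ : 0 < ρ t ω := by rw [hn]; exact_mod_cast hn1
        have hμ : μb t ω = 0 := by rw [hm, hm0]; simp
        obtain ⟨h1, h2⟩ := hcase2 t ω hρ hμ
        obtain ⟨h1', h2'⟩ := hcase2 t ω' (hρe ▸ hρ) (hμe.symm.trans hμ)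
        exact ⟨by rw [h1, h1', hρe, hwt], by rw [h2, h2', hμe]⟩
      · -- case 1
        have hρ : 0 < ρ t ω := by rw [hn]; exact_mod_cast hn1
        have hm1' : (1:ℝ) ≤ m := by exact_mod_cast hm1
        have hμ : μb t ω < 0 := by rw [hm]; linarith
        obtain ⟨h1, h2⟩ := hcase1 t ω hρ hμ
        obtain ⟨h1', h2'⟩ := hcase1 t ω' (hρe ▸ hρ) (hμe ▸ hμ)
        exact ⟨by rw [h1, h1', hρe, hwt], by rw [h2, h2', hμe, hwt]⟩
  intro t w
  set S : Set Ω := {ω | ∀ s < t, W s ω = w s} with hS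
  have hSmeas : MeasurableSet S := by
    have hrepr : S = ⋂ s ∈ Set.Iio t, (W s) ⁻¹' {w s} := by
      rw [hS]; ext ω; simp [Set.mem_Iio]
    rw [hrepr]
    exact MeasurableSet.biInter (Set.to_countable _)
      (fun s _ => hWmeas s (measurableSet_singleton _))
  rcases Set.eq_empty_or_nonempty S with hSe | ⟨ω₀, hω₀⟩
  · rw [hSe]; simp
  · have hω₀' : ∀ s < t, W s ω₀ = w s := hω₀
    have key : ∃ a b : ℝ, 0 ≤ b ∧ a - b * ε ≤ -ε ∧
        ∀ ω ∈ S, (ρ (t + 1) ω + α * μb (t + 1) ω) - (ρ t ω + α * μb t ω)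
          = a + b * W t ω := by
      obtain ⟨⟨n, hn⟩, ⟨m, hm⟩⟩ := lemA t ω₀
      have htrans : ∀ ω ∈ S, ρ t ω = (n : ℝ) ∧ μb t ω = -(m : ℝ) := by
        intro ω hω
        have hω' : ∀ s < t, W s ω = w s := hω
        obtain ⟨e1, e2⟩ := lemB t ω ω₀ (fun s hs => (hω' s hs).trans (hω₀' s hs).symm)
        exact ⟨e1.trans hn, e2.trans hm⟩
      rcases Nat.eq_zero_or_pos n with hn0 | hn1 <;>
        rcases Nat.eq_zero_or_pos m with hm0 | hm1
      · -- case 4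
        refine ⟨(1 - α) / 2, (1 + α) / 2, by linarith, ?_, ?_⟩
        · nlinarith [mul_nonneg (by linarith : (0:ℝ) ≤ α - 1) (by linarith : (0:ℝ) ≤ 1 + ε)]
        intro ω hω
        obtain ⟨hρ, hμ⟩ := htrans ω hω
        rw [hn0] at hρ; rw [hm0] at hμ
        norm_num at hρ hμ
        obtain ⟨h1, h2⟩ := hcase4 t ω hρ hμ
        rcases hWpm t ω with hv | hv
        · rw [(h1 hv).1, (h1 hv).2, hρ, hμ, hv]; ring
        · rw [(h2 hv).1, (h2 hv).2, hρ, hμ, hv]; ring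
      · -- case 3
        refine ⟨1 / 2, α + 1 / 2, by linarith, by nlinarith, ?_⟩
        intro ω hω
        obtain ⟨hρ, hμ⟩ := htrans ω hω
        rw [hn0] at hρ; norm_num at hρ
        have hm1' : (1:ℝ) ≤ m := by exact_mod_cast hm1
        have hμn : μb t ω < 0 := by rw [hμ]; linarith
        obtain ⟨h1, h2⟩ := hcase3 t ω hρ hμn
        rcases hWpm t ω with hv | hv
        · rw [h1, h2, hρ, hμ, hv, min_eq_right (by linarith : -(m:ℝ) + 1 ≤ 0),
            max_eq_right (by norm_num : (0:ℝ) ≤ 1)]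
          ring
        · rw [h1, h2, hρ, hμ, hv, min_eq_right (by linarith : -(m:ℝ) + -1 ≤ 0),
            max_eq_left (by norm_num : (-1:ℝ) ≤ 0)]
          ring
      · -- case 2
        refine ⟨0, 1, zero_le_one, by linarith, ?_⟩
        intro ω hω
        obtain ⟨hρ, hμ⟩ := htrans ω hω
        rw [hm0] at hμ; norm_num at hμ
        have hρp : 0 < ρ t ω := by rw [hρ]; exact_mod_cast hn1
        obtain ⟨h1, h2⟩ := hcase2 t ω hρp hμ
        rw [h1, h2]; ring
      · -- case 1
        refine ⟨0, 1 + α, by linarith, by nlinarith, ?_⟩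
        intro ω hω
        obtain ⟨hρ, hμ⟩ := htrans ω hω
        have hm1' : (1:ℝ) ≤ m := by exact_mod_cast hm1
        have hρp : 0 < ρ t ω := by rw [hρ]; exact_mod_cast hn1
        have hμn : μb t ω < 0 := by rw [hμ]; linarith
        obtain ⟨h1, h2⟩ := hcase1 t ω hρp hμn
        rcases hWpm t ω with hv | hv
        · rw [h1, h2, hμ, hv, min_eq_right (by linarith : -(m:ℝ) + 1 ≤ 0)]; ring
        · rw [h1, h2, hμ, hv, min_eq_right (by linarith : -(m:ℝ) + -1 ≤ 0)]; ring
    obtain ⟨a, b, hb, hab, heq⟩ := key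
    have hWint : Integrable (W t) μ := by
      refine (integrable_const (1:ℝ)).mono' (hWmeas t).aestronglyMeasurable (ae_of_all _ ?_)
      intro ω; rcases hWpm t ω with h | h <;> simp [h]
    have hWSint : IntegrableOn (W t) S μ := hWint.integrableOn
    have h1 : (∫ ω in S, ((ρ (t + 1) ω + α * μb (t + 1) ω) - (ρ t ω + α * μb t ω)) ∂μ)
        = ∫ ω in S, (a + b * W t ω) ∂μ :=
      setIntegral_congr_fun hSmeas (fun ω hω => heq ω hω)
    rw [h1]
    have h2 : (∫ ω in S, (a + b * W t ω) ∂μ)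
        = a * (μ S).toReal + b * ∫ ω in S, W t ω ∂μ := by
      rw [integral_add (integrableOn_const (measure_ne_top μ S) enorm_ne_top : IntegrableOn (fun _ => a) S μ) (hWSint.const_mul b),
        integral_const_mul, setIntegral_const, smul_eq_mul, mul_comm, Measure.real]
    rw [h2]
    have h3 := hdrift t w
    rw [← hS] at h3
    have hμS : (0:ℝ) ≤ (μ S).toReal := ENNReal.toReal_nonneg
    nlinarith [mul_le_mul_of_nonneg_left h3 hb, mul_le_mul_of_nonneg_right hab hμS]
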